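/- Let Λ ∈ S^m be positive semidefinite. Then there exists Y ∈ S^m (which may be chosen positive semidefinite) such that Y∘Λ = 0 and Y ∈ Φ(Λ), i.e., ⟨W∘W, Λ⟩ > 0 for every nonzero W ∈ S^m with Y∘W = 0. -/

import Mathlib

open Matrix

noncomputable section

def jmul {m : ℕ} (A B : Matrix (Fin m) (Fin m) ℝ) : Matrix (Fin m) (Fin m) ℝ :=
  (1 / 2 : ℝ) • (A * B + B * A)

def minner {m : ℕ} (A B : Matrix (Fin m) (Fin m) ℝ) : ℝ :=
  (A * B).trace

def memPhi {m : ℕ} (Λ Y : Matrix (Fin m) (Fin m) ℝ) : Prop :=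
  ∀ W : Matrix (Fin m) (Fin m) ℝ, W.IsSymm → W ≠ 0 → jmul Y W = 0 →
    0 < minner (jmul W W) Λ

def pderivG {n m : ℕ} (G : (Fin n → ℝ) → Matrix (Fin m) (Fin m) ℝ)
    (x : Fin n → ℝ) (k : Fin n) : Matrix (Fin m) (Fin m) ℝ :=
  Matrix.of fun i j => fderiv ℝ (fun y => G y i j) x (Pi.single k 1)

def dirDerivG {n m : ℕ} (G : (Fin n → ℝ) → Matrix (Fin m) (Fin m) ℝ)
    (x v : Fin n → ℝ) : Matrix (Fin m) (Fin m) ℝ :=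
  ∑ k, v k • pderivG G x k

def adjDG {n m : ℕ} (G : (Fin n → ℝ) → Matrix (Fin m) (Fin m) ℝ)
    (x : Fin n → ℝ) (W : Matrix (Fin m) (Fin m) ℝ) : Fin n → ℝ :=
  fun k => minner (pderivG G x k) W

def gradf {n : ℕ} (f : (Fin n → ℝ) → ℝ) (x : Fin n → ℝ) : Fin n → ℝ :=
  fun k => fderiv ℝ f x (Pi.single k 1)

def KKT1 {n m : ℕ} (f : (Fin n → ℝ) → ℝ) (G : (Fin n → ℝ) → Matrix (Fin m) (Fin m) ℝ)
    (x : Fin n → ℝ) (Λ : Matrix (Fin m) (Fin m) ℝ) : Prop :=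
  gradf f x = adjDG G x Λ ∧ Λ.PosSemidef ∧ (G x).PosSemidef ∧ jmul Λ (G x) = 0

def KKT2 {n m : ℕ} (f : (Fin n → ℝ) → ℝ) (G : (Fin n → ℝ) → Matrix (Fin m) (Fin m) ℝ)
    (x : Fin n → ℝ) (Y Λ : Matrix (Fin m) (Fin m) ℝ) : Prop :=
  gradf f x = adjDG G x Λ ∧ jmul Λ Y = 0 ∧ G x = jmul Y Y

def hessQ {n m : ℕ} (f : (Fin n → ℝ) → ℝ) (G : (Fin n → ℝ) → Matrix (Fin m) (Fin m) ℝ)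
    (Λ : Matrix (Fin m) (Fin m) ℝ) (x v : Fin n → ℝ) : ℝ :=
  iteratedFDeriv ℝ 2 (fun y => f y - minner (G y) Λ) x ![v, v]

def SOSCNLP {n m : ℕ} (f : (Fin n → ℝ) → ℝ) (G : (Fin n → ℝ) → Matrix (Fin m) (Fin m) ℝ)
    (x : Fin n → ℝ) (Y Λ : Matrix (Fin m) (Fin m) ℝ) : Prop :=
  ∀ (v : Fin n → ℝ) (W : Matrix (Fin m) (Fin m) ℝ), W.IsSymm →
    ¬(v = 0 ∧ W = 0) → dirDerivG G x v = (2 : ℝ) • jmul Y W →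
    0 < hessQ f G Λ x v + 2 * minner (jmul W W) Λ

def SONCNLP {n m : ℕ} (f : (Fin n → ℝ) → ℝ) (G : (Fin n → ℝ) → Matrix (Fin m) (Fin m) ℝ)
    (x : Fin n → ℝ) (Y Λ : Matrix (Fin m) (Fin m) ℝ) : Prop :=
  ∀ (v : Fin n → ℝ) (W : Matrix (Fin m) (Fin m) ℝ), W.IsSymm →
    dirDerivG G x v = (2 : ℝ) • jmul Y W →
    0 ≤ hessQ f G Λ x v + 2 * minner (jmul W W) Λ

def LICQ {n m : ℕ} (G : (Fin n → ℝ) → Matrix (Fin m) (Fin m) ℝ)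
    (x : Fin n → ℝ) (Y : Matrix (Fin m) (Fin m) ℝ) : Prop :=
  ∀ W : Matrix (Fin m) (Fin m) ℝ, W.IsSymm → jmul Y W = 0 → adjDG G x W = 0 → W = 0

def Nondeg {n m : ℕ} (G : (Fin n → ℝ) → Matrix (Fin m) (Fin m) ℝ)
    (x : Fin n → ℝ) : Prop :=
  ∀ W : Matrix (Fin m) (Fin m) ℝ, W.IsSymm → G x * W = 0 → adjDG G x W = 0 → W = 0

def CritCone {n m : ℕ} (f : (Fin n → ℝ) → ℝ) (G : (Fin n → ℝ) → Matrix (Fin m) (Fin m) ℝ)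
    (x : Fin n → ℝ) : Set (Fin n → ℝ) :=
  {d | (∀ u : Fin m → ℝ, G x *ᵥ u = 0 → 0 ≤ u ⬝ᵥ (dirDerivG G x d *ᵥ u)) ∧
    gradf f x ⬝ᵥ d = 0}

def IsMPInv {m : ℕ} (A P : Matrix (Fin m) (Fin m) ℝ) : Prop :=
  A * P * A = A ∧ P * A * P = P ∧ (A * P)ᵀ = A * P ∧ (P * A)ᵀ = P * A

def Hmat {n m : ℕ} (G : (Fin n → ℝ) → Matrix (Fin m) (Fin m) ℝ)
    (x : Fin n → ℝ) (Λ P : Matrix (Fin m) (Fin m) ℝ) : Matrix (Fin n) (Fin n) ℝ :=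
  Matrix.of fun i j => 2 * (pderivG G x i * P * pderivG G x j * Λ).trace

lemma conjT_eq_self {m : ℕ} {W : Matrix (Fin m) (Fin m) ℝ} (h : W.IsSymm) : Wᴴ = W := by
  ext i j
  simpa using congrFun (congrFun h i) j

open scoped MatrixOrder in
def Matrix.PosSemidef.sqrt {m : ℕ} {M : Matrix (Fin m) (Fin m) ℝ} (_hM : M.PosSemidef) :
    Matrix (Fin m) (Fin m) ℝ := CFC.sqrt M

open scoped MatrixOrder in
lemma Matrix.PosSemidef.sqrt_mul_self {m : ℕ} {M : Matrix (Fin m) (Fin m) ℝ}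
    (hM : M.PosSemidef) : hM.sqrt * hM.sqrt = M :=
  CFC.sqrt_mul_sqrt_self M hM.nonneg

open scoped MatrixOrder in
lemma Matrix.PosSemidef.posSemidef_sqrt {m : ℕ} {M : Matrix (Fin m) (Fin m) ℝ}
    (hM : M.PosSemidef) : hM.sqrt.PosSemidef :=
  (CFC.sqrt_nonneg M).posSemidef

lemma psd_trace_nonneg {m : ℕ} {M : Matrix (Fin m) (Fin m) ℝ} (hM : M.PosSemidef) :
    0 ≤ M.trace := by
  rw [Matrix.trace]
  apply Finset.sum_nonneg
  intro i _
  have := hM.dotProduct_mulVec_nonneg (Pi.single i 1)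
  simpa [dotProduct, Pi.single_apply, Matrix.mulVec] using this

lemma psd_trace_zero {m : ℕ} {M : Matrix (Fin m) (Fin m) ℝ} (hM : M.PosSemidef)
    (h : M.trace = 0) : M = 0 := by
  have hB : hM.sqrt * hM.sqrt = M := hM.sqrt_mul_self
  have hBH : hM.sqrtᴴ = hM.sqrt := hM.posSemidef_sqrt.1
  have h0 : hM.sqrtᴴ * hM.sqrt = 0 := by
    have htr : (hM.sqrtᴴ * hM.sqrt).trace = 0 := by rw [hBH, hB, h]
    have : ∀ i j, hM.sqrt i j = 0 := by
      have hsum : ∑ j, ∑ i, hM.sqrt i j * hM.sqrt i j = 0 := by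
        simpa [Matrix.trace, Matrix.mul_apply, Matrix.diag, Matrix.conjTranspose_apply]
          using htr
      intro i j
      have h1 : ∀ j ∈ Finset.univ, (0:ℝ) ≤ ∑ i, hM.sqrt i j * hM.sqrt i j := by
        intro j _
        exact Finset.sum_nonneg fun i _ => mul_self_nonneg _
      have h2 := (Finset.sum_eq_zero_iff_of_nonneg h1).mp hsum j (Finset.mem_univ j)
      have h3 : ∀ i ∈ Finset.univ, (0:ℝ) ≤ hM.sqrt i j * hM.sqrt i j :=
        fun i _ => mul_self_nonneg _
      have := (Finset.sum_eq_zero_iff_of_nonneg h3).mp h2 i (Finset.mem_univ i)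
      exact mul_self_eq_zero.mp this
    have : hM.sqrt = 0 := by ext i j; exact this i j
    rw [this]; simp
  rw [hBH, hB] at h0
  exact h0


theorem stmt3 {m : ℕ} (Λ : Matrix (Fin m) (Fin m) ℝ) (hΛ : Λ.PosSemidef) :
    ∃ Y : Matrix (Fin m) (Fin m) ℝ, Y.PosSemidef ∧ jmul Y Λ = 0 ∧ memPhi Λ Y := by
  classical
  have hex : ∃ Y : Matrix (Fin m) (Fin m) ℝ, Y.PosSemidef ∧ Y * Λ = 0 ∧ Λ * Y = 0 ∧
      Y * Y = Y ∧ (Λ + Y).det ≠ 0 := by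
    have hH := hΛ.1
    set U : Matrix (Fin m) (Fin m) ℝ := (hH.eigenvectorUnitary : Matrix (Fin m) (Fin m) ℝ)
      with hUdef
    set d : Fin m → ℝ := hH.eigenvalues with hddef
    set D : Matrix (Fin m) (Fin m) ℝ := diagonal d with hDdef
    set e : Fin m → ℝ := fun i => if d i = 0 then 1 else 0 with hedef
    set E : Matrix (Fin m) (Fin m) ℝ := diagonal e with hEdef
    have hUU : U * star U = 1 := Matrix.mem_unitaryGroup_iff.mp hH.eigenvectorUnitary.2
    have hUU' : star U * U = 1 := Matrix.mem_unitaryGroup_iff'.mp hH.eigenvectorUnitary.2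
    have hspec : Λ = U * D * star U := by
      have := hH.spectral_theorem
      simpa using this
    have hED : E * D = 0 := by
      rw [hEdef, hDdef, Matrix.diagonal_mul_diagonal]
      ext i j
      by_cases h : d i = 0 <;> simp [Matrix.diagonal, hedef, h]
    have hDE : D * E = 0 := by
      rw [hEdef, hDdef, Matrix.diagonal_mul_diagonal]
      ext i j
      by_cases h : d i = 0 <;> simp [Matrix.diagonal, hedef, h]
    have hEE : E * E = E := by
      rw [hEdef, Matrix.diagonal_mul_diagonal]
      have : (fun i => e i * e i) = e := by
        funext i
        by_cases h : d i = 0 <;> simp [hedef, h]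
      rw [this]
    have hstar : ∀ X : Matrix (Fin m) (Fin m) ℝ, star U * (U * X) = X := fun X => by
      rw [← Matrix.mul_assoc, hUU', Matrix.one_mul]
    have key : ∀ A B : Matrix (Fin m) (Fin m) ℝ,
        (U * A * star U) * (U * B * star U) = U * (A * B) * star U := by
      intro A B
      simp only [Matrix.mul_assoc, hstar]
    refine ⟨U * E * star U, ?_, ?_, ?_, ?_, ?_⟩
    · have hEpsd : E.PosSemidef := by
        rw [hEdef]
        refine Matrix.posSemidef_diagonal_iff.mpr fun i => ?_
        by_cases h : d i = 0 <;> simp [hedef, h]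
      exact hEpsd.mul_mul_conjTranspose_same U
    · rw [hspec, key, hED]; simp
    · rw [hspec, key, hDE]; simp
    · rw [key, hEE]
    · have hsum : Λ + U * E * star U = U * (D + E) * star U := by
        rw [hspec, Matrix.mul_add, Matrix.add_mul]
      have hdetDE : (D + E).det ≠ 0 := by
        have : D + E = diagonal (fun i => d i + e i) := by
          rw [hDdef, hEdef, Matrix.diagonal_add]
        rw [this, Matrix.det_diagonal]
        apply Finset.prod_ne_zero_iff.mpr
        intro i _
        by_cases h : d i = 0 <;> simp [hedef, h]
      rw [hsum, Matrix.det_mul, Matrix.det_mul]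
      have h1 : U.det * (star U).det = 1 := by
        rw [← Matrix.det_mul, hUU, Matrix.det_one]
      intro h
      rcases mul_eq_zero.mp h with h | h
      · rcases mul_eq_zero.mp h with h | h
        · rw [h] at h1; simp at h1
        · exact hdetDE h
      · rw [h] at h1; simp at h1
  obtain ⟨Y, hYpsd, hYΛ, hΛY, hYY, hdet⟩ := hex
  refine ⟨Y, hYpsd, ?_, ?_⟩
  · rw [jmul, hYΛ, hΛY]; simp
  · intro W hWs hW0 hjW
    have hanti : Y * W + W * Y = 0 := by
      have : ((1:ℝ)/2) • (Y * W + W * Y) = 0 := hjW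
      rcases smul_eq_zero.mp this with h | h
      · norm_num at h
      · exact h
    have hanti' : Y * W = -(W * Y) := by linear_combination (norm := abel) hanti
    have hcomm : Y * W = W * Y := by
      have h1 : Y * (Y * W) = Y * W := by rw [← Matrix.mul_assoc, hYY]
      have h2 : Y * (Y * W) = W * Y := by
        rw [hanti']
        calc Y * -(W * Y) = -(Y * W * Y) := by rw [Matrix.mul_neg, Matrix.mul_assoc]
          _ = -(-(W * Y) * Y) := by rw [hanti']
          _ = W * (Y * Y) := by rw [Matrix.neg_mul, neg_neg, Matrix.mul_assoc]
          _ = W * Y := by rw [hYY]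
      rw [← h1, h2]
    have hYW : Y * W = 0 := by
      have h : Y * W + Y * W = 0 := by nth_rewrite 2 [hcomm]; exact hanti
      have h2 : (2:ℝ) • (Y * W) = 0 := by rw [two_smul]; exact h
      rcases smul_eq_zero.mp h2 with h | h
      · norm_num at h
      · exact h
    have hWH : Wᴴ = W := by
      ext i j
      simpa using congrFun (congrFun hWs i) j
    have hminner : minner (jmul W W) Λ = (Wᴴ * Λ * W).trace := by
      rw [minner, jmul]
      have h1 : (1/2 : ℝ) • (W * W + W * W) = W * W := by
        rw [smul_add, ← add_smul]
        norm_num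
      rw [h1, hWH]
      rw [Matrix.mul_assoc, Matrix.trace_mul_comm, Matrix.mul_assoc]
    have hMpsd : (Wᴴ * Λ * W).PosSemidef := hΛ.conjTranspose_mul_mul_same W
    have hnonneg : 0 ≤ (Wᴴ * Λ * W).trace := psd_trace_nonneg hMpsd
    rw [hminner]
    rcases lt_or_eq_of_le hnonneg with h | h
    · exact h
    · exfalso
      have hM0 : Wᴴ * Λ * W = 0 := psd_trace_zero hMpsd h.symm
      have hsq : hΛ.sqrt * hΛ.sqrt = Λ := hΛ.sqrt_mul_self
      have hsqH : hΛ.sqrtᴴ = hΛ.sqrt := hΛ.posSemidef_sqrt.1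
      have hBW : hΛ.sqrt * W = 0 := by
        have h0 : (hΛ.sqrt * W)ᴴ * (hΛ.sqrt * W) = 0 := by
          rw [Matrix.conjTranspose_mul, hsqH, hWH]
          calc W * hΛ.sqrt * (hΛ.sqrt * W)
              = W * (hΛ.sqrt * hΛ.sqrt) * W := by
                rw [Matrix.mul_assoc, Matrix.mul_assoc, Matrix.mul_assoc]
            _ = Wᴴ * Λ * W := by rw [hsq, hWH, Matrix.mul_assoc]
            _ = 0 := hM0
        exact Matrix.conjTranspose_mul_self_eq_zero.mp h0
      have hΛW : Λ * W = 0 := by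
        rw [← hsq, Matrix.mul_assoc, hBW, Matrix.mul_zero]
      have hzero : (Λ + Y) * W = 0 := by rw [Matrix.add_mul, hΛW, hYW, add_zero]
      have hW : W = 0 := by
        calc W = 1 * W := (Matrix.one_mul W).symm
          _ = ((Λ + Y)⁻¹ * (Λ + Y)) * W := by
              rw [Matrix.nonsing_inv_mul _ (isUnit_iff_ne_zero.mpr hdet)]
          _ = (Λ + Y)⁻¹ * ((Λ + Y) * W) := by rw [Matrix.mul_assoc]
          _ = 0 := by rw [hzero, Matrix.mul_zero]
      exact hW0 hW
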